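/- Fix integers r ≥ 2 and K ≥ 0. Let (λ_n) be positive reals with λ_n → 0 and n^{1/r}·λ_n → ∞. For each n > K, define the probability vector p^{(n)} = (p_0, …, p_r) by p_ℓ = e^{−λ_n}·λ_n^ℓ/ℓ! for 0 ≤ ℓ ≤ r−1 and p_r = Pr(Poisson(λ_n) ≥ r), and the probability vector p̄^{(n)} by p̄_ℓ = (1 − K/n)·p_ℓ for ℓ ≤ r−1 and p̄_r = (1 − K/n)·p_r + K/n. Then d_TV(Multinomial(n; p^{(n)}), Multinomial(n; p̄^{(n)})) → 0 as n → ∞. -/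

import Mathlib

open Filter
open scoped Topology

/-- The probability mass function of the `Poisson (lam)` distribution:
`x ↦ exp (-lam) * lam^x / x!`. -/
noncomputable def poissonPmfR (lam : ℝ) (x : ℕ) : ℝ :=
  Real.exp (-lam) * lam ^ x / (x.factorial : ℝ)

/-- The probability mass function of the `Multinomial (n; p)` distribution on count vectors
`k : Fin d → ℕ`: it equals `n! ∏_ℓ p ℓ ^ (k ℓ) / (k ℓ)!` when `∑ ℓ, k ℓ = n`, and `0`
otherwise. -/
noncomputable def multinomialPmf {d : ℕ} (n : ℕ) (p : Fin d → ℝ) (k : Fin d → ℕ) : ℝ :=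
  if (∑ ℓ, k ℓ) = n then
    (n.factorial : ℝ) * ∏ ℓ, p ℓ ^ (k ℓ) / ((k ℓ).factorial : ℝ)
  else 0

/-- The probability vector `(p_0, …, p_r)` obtained from a `Poisson (lam)` variable `N` by
`p_ℓ = Pr (N = ℓ)` for `ℓ < r` and `p_r = Pr (N ≥ r)`. -/
noncomputable def poissonBucketVec (r : ℕ) (lam : ℝ) : Fin (r + 1) → ℝ :=
  fun ℓ => if (ℓ : ℕ) < r then poissonPmfR lam (ℓ : ℕ)
    else ∑' i : ℕ, if r ≤ i then poissonPmfR lam i else 0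

open Finset

lemma poissonPmfR_pos {lam : ℝ} (h : 0 < lam) (x : ℕ) : 0 < poissonPmfR lam x := by
  unfold poissonPmfR
  positivity

lemma summable_poissonPmfR (lam : ℝ) : Summable (poissonPmfR lam) := by
  have : poissonPmfR lam = fun x => Real.exp (-lam) * (lam ^ x / (x.factorial : ℝ)) := by
    funext x; rw [poissonPmfR, mul_div_assoc]
  rw [this]
  exact (Real.summable_pow_div_factorial lam).mul_left _

lemma tsum_poissonPmfR (lam : ℝ) : ∑' x, poissonPmfR lam x = 1 := by
  have h1 : ∑' x, poissonPmfR lam x = Real.exp (-lam) * ∑' x, lam ^ x / (x.factorial : ℝ) := by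
    rw [← tsum_mul_left]
    congr 1; funext x; rw [poissonPmfR, mul_div_assoc]
  have h2 : ∑' x : ℕ, lam ^ x / (x.factorial : ℝ) = Real.exp lam := by
    rw [Real.exp_eq_exp_ℝ, NormedSpace.exp_eq_tsum_div]
  rw [h1, h2, ← Real.exp_add, neg_add_cancel, Real.exp_zero]

lemma summable_tail (lam : ℝ) (r : ℕ) (h : 0 < lam) :
    Summable (fun i => if r ≤ i then poissonPmfR lam i else 0) := by
  refine Summable.of_nonneg_of_le (fun i => ?_) (fun i => ?_) (summable_poissonPmfR lam)
  · by_cases hi : r ≤ i <;> simp [hi, (poissonPmfR_pos h i).le]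
  · by_cases hi : r ≤ i <;> simp [hi, (poissonPmfR_pos h i).le]

lemma bucket_last (r : ℕ) (lam : ℝ) :
    poissonBucketVec r lam (Fin.last r) = ∑' i : ℕ, if r ≤ i then poissonPmfR lam i else 0 := by
  simp [poissonBucketVec]

lemma bucket_pos {r : ℕ} {lam : ℝ} (h : 0 < lam) (ℓ : Fin (r + 1)) :
    0 < poissonBucketVec r lam ℓ := by
  unfold poissonBucketVec
  split
  · exact poissonPmfR_pos h _
  · calc (0:ℝ) < poissonPmfR lam r := poissonPmfR_pos h r
      _ = if r ≤ r then poissonPmfR lam r else 0 := by simp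
      _ ≤ _ := Summable.le_tsum (summable_tail lam r h) r (fun i _ => by
          by_cases hi : r ≤ i <;> simp [hi, (poissonPmfR_pos h i).le])

lemma bucket_last_ge {r : ℕ} {lam : ℝ} (h : 0 < lam) :
    poissonPmfR lam r ≤ poissonBucketVec r lam (Fin.last r) := by
  rw [bucket_last]
  calc poissonPmfR lam r = if r ≤ r then poissonPmfR lam r else 0 := by simp
    _ ≤ _ := Summable.le_tsum (summable_tail lam r h) r (fun i _ => by
        by_cases hi : r ≤ i <;> simp [hi, (poissonPmfR_pos h i).le])

lemma bucket_sum {r : ℕ} {lam : ℝ} (h : 0 < lam) :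
    ∑ ℓ, poissonBucketVec r lam ℓ = 1 := by
  rw [Fin.sum_univ_castSucc]
  have h1 : ∀ i : Fin r, poissonBucketVec r lam (Fin.castSucc i) = poissonPmfR lam i := by
    intro i
    simp [poissonBucketVec, i.isLt]
  rw [Finset.sum_congr rfl (fun i _ => h1 i), bucket_last]
  have hsplit : ∀ i : ℕ, poissonPmfR lam i =
      (if i < r then poissonPmfR lam i else 0) + (if r ≤ i then poissonPmfR lam i else 0) := by
    intro i
    rcases lt_or_ge i r with hi | hi
    · simp [hi, not_le.2 hi]
    · simp [hi, not_lt.2 hi]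
  have hhead : Summable (fun i => if i < r then poissonPmfR lam i else 0) := by
    refine Summable.of_nonneg_of_le (fun i => ?_) (fun i => ?_) (summable_poissonPmfR lam)
    · by_cases hi : i < r <;> simp [hi, (poissonPmfR_pos h i).le]
    · by_cases hi : i < r <;> simp [hi, (poissonPmfR_pos h i).le]
  have := tsum_poissonPmfR lam
  rw [tsum_congr hsplit, Summable.tsum_add hhead (summable_tail lam r h)] at this
  have hts : ∑' i : ℕ, (if i < r then poissonPmfR lam i else 0)
      = ∑ i ∈ Finset.range r, poissonPmfR lam i := by
    rw [tsum_eq_sum (s := Finset.range r) (fun i hi => by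
      simp only [Finset.mem_range] at hi; simp [hi])]
    exact Finset.sum_congr rfl (fun i hi => by simp [Finset.mem_range.1 hi])
  rw [hts] at this
  have hfin := Fin.sum_univ_eq_sum_range (fun i => poissonPmfR lam i) r
  rw [hfin]
  linarith


lemma multinomial_sum_real (d n : ℕ) (a : Fin d → ℝ) :
    ∑ k ∈ Finset.piAntidiag (univ : Finset (Fin d)) n,
      ((n.factorial : ℝ) * ∏ ℓ, a ℓ ^ (k ℓ) / ((k ℓ).factorial : ℝ)) = (∑ ℓ, a ℓ) ^ n := by
  rw [Finset.sum_pow_eq_sum_piAntidiag (univ : Finset (Fin d)) a n]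
  refine Finset.sum_congr rfl (fun k hk => ?_)
  rw [Finset.mem_piAntidiag] at hk
  have hsum : ∑ ℓ, k ℓ = n := hk.1
  have hfact : ((∏ i, (k i).factorial : ℕ) : ℝ) ≠ 0 := by
    have h0 : 0 < ∏ i, (k i).factorial := Finset.prod_pos (fun i _ => Nat.factorial_pos _)
    exact_mod_cast h0.ne'
  have hspec : ((∏ i, (k i).factorial : ℕ) : ℝ) * (Nat.multinomial univ k : ℝ)
      = (n.factorial : ℝ) := by
    rw_mod_cast [Nat.multinomial_spec univ k, hsum]
  have hprod : ∏ ℓ, a ℓ ^ (k ℓ) / ((k ℓ).factorial : ℝ)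
      = (∏ ℓ, a ℓ ^ (k ℓ)) / ((∏ i, (k i).factorial : ℕ) : ℝ) := by
    push_cast
    rw [Finset.prod_div_distrib]
  rw [hprod]
  field_simp
  push_cast at hspec ⊢
  rw [← hspec]
  ring

lemma tv_bound (d n : ℕ) (p q : Fin d → ℝ) (hp : ∀ ℓ, 0 < p ℓ)
    (hsp : ∑ ℓ, p ℓ = 1) (hsq : ∑ ℓ, q ℓ = 1) :
    ∑' k : Fin d → ℕ, |multinomialPmf n p k - multinomialPmf n q k|
      ≤ Real.sqrt ((∑ ℓ, q ℓ ^ 2 / p ℓ) ^ n - 1) := by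
  classical
  set A := Finset.piAntidiag (univ : Finset (Fin d)) n with hA
  have hmemA : ∀ k : Fin d → ℕ, k ∈ A ↔ (∑ ℓ, k ℓ) = n := by
    intro k; simp [hA, Finset.mem_piAntidiag]
  set P := multinomialPmf n p with hP
  set Q := multinomialPmf n q with hQ
  have htsum : ∑' k : Fin d → ℕ, |P k - Q k| = ∑ k ∈ A, |P k - Q k| := by
    refine tsum_eq_sum (fun k hk => ?_)
    have hne : (∑ ℓ, k ℓ) ≠ n := fun h => hk ((hmemA k).2 h)
    simp [hP, hQ, multinomialPmf, hne]
  have hPval : ∀ k ∈ A, P k = (n.factorial : ℝ) * ∏ ℓ, p ℓ ^ (k ℓ) / ((k ℓ).factorial : ℝ) := by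
    intro k hk; simp [hP, multinomialPmf, (hmemA k).1 hk]
  have hQval : ∀ k ∈ A, Q k = (n.factorial : ℝ) * ∏ ℓ, q ℓ ^ (k ℓ) / ((k ℓ).factorial : ℝ) := by
    intro k hk; simp [hQ, multinomialPmf, (hmemA k).1 hk]
  have hPpos : ∀ k ∈ A, 0 < P k := by
    intro k hk
    rw [hPval k hk]
    exact mul_pos (by positivity)
      (Finset.prod_pos fun ℓ _ => div_pos (pow_pos (hp ℓ) _) (by positivity))
  have hsumP : ∑ k ∈ A, P k = 1 := by
    rw [Finset.sum_congr rfl hPval, multinomial_sum_real, hsp, one_pow]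
  have hsumQ : ∑ k ∈ A, Q k = 1 := by
    rw [Finset.sum_congr rfl hQval, multinomial_sum_real, hsq, one_pow]
  have hsumQQ : ∑ k ∈ A, (Q k) ^ 2 / P k = (∑ ℓ, q ℓ ^ 2 / p ℓ) ^ n := by
    rw [← multinomial_sum_real d n (fun ℓ => q ℓ ^ 2 / p ℓ)]
    refine Finset.sum_congr rfl (fun k hk => ?_)
    rw [hPval k hk, hQval k hk]
    have hprodeq : ∏ ℓ, (q ℓ ^ 2 / p ℓ) ^ (k ℓ) / ((k ℓ).factorial : ℝ)
        = (∏ ℓ, q ℓ ^ (k ℓ) / ((k ℓ).factorial : ℝ)) ^ 2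
          / (∏ ℓ, p ℓ ^ (k ℓ) / ((k ℓ).factorial : ℝ)) := by
      rw [← Finset.prod_pow, ← Finset.prod_div_distrib]
      refine Finset.prod_congr rfl (fun ℓ _ => ?_)
      have h1 : p ℓ ≠ 0 := (hp ℓ).ne'
      have h2 : ((k ℓ).factorial : ℝ) ≠ 0 := by positivity
      field_simp
      ring_nf
      rw [mul_assoc, ← mul_pow, mul_inv_cancel₀ h1, one_pow, mul_one]
    rw [hprodeq]
    have hY : (0 : ℝ) < ∏ ℓ, p ℓ ^ (k ℓ) / ((k ℓ).factorial : ℝ) :=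
      Finset.prod_pos fun ℓ _ => div_pos (pow_pos (hp ℓ) _) (by positivity)
    have hn : ((n.factorial : ℕ) : ℝ) ≠ 0 := by positivity
    rw [mul_pow, pow_two ((n.factorial : ℕ) : ℝ), mul_assoc, mul_div_mul_left _ _ hn,
      mul_div_assoc]
  have hcs := Finset.sum_mul_sq_le_sq_mul_sq A (fun k => Real.sqrt (P k))
    (fun k => |P k - Q k| / Real.sqrt (P k))
  have h1 : ∑ k ∈ A, Real.sqrt (P k) * (|P k - Q k| / Real.sqrt (P k))
      = ∑ k ∈ A, |P k - Q k| := by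
    refine Finset.sum_congr rfl (fun k hk => ?_)
    have hs : Real.sqrt (P k) ≠ 0 := (Real.sqrt_pos.2 (hPpos k hk)).ne'
    field_simp
  have h2 : ∑ k ∈ A, (Real.sqrt (P k)) ^ 2 = ∑ k ∈ A, P k :=
    Finset.sum_congr rfl (fun k hk => Real.sq_sqrt (hPpos k hk).le)
  have h3 : ∑ k ∈ A, (|P k - Q k| / Real.sqrt (P k)) ^ 2
      = ∑ k ∈ A, (P k - 2 * Q k + (Q k) ^ 2 / P k) := by
    refine Finset.sum_congr rfl (fun k hk => ?_)
    have hpos := hPpos k hk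
    rw [div_pow, sq_abs, Real.sq_sqrt hpos.le]
    field_simp
    ring
  rw [h1, h2, h3] at hcs
  have h4 : ∑ k ∈ A, (P k - 2 * Q k + (Q k) ^ 2 / P k) = (∑ ℓ, q ℓ ^ 2 / p ℓ) ^ n - 1 := by
    rw [Finset.sum_add_distrib, Finset.sum_sub_distrib, ← Finset.mul_sum, hsumP, hsumQ, hsumQQ]
    ring
  rw [h4, hsumP, one_mul] at hcs
  rw [htsum]
  have hnn : 0 ≤ ∑ k ∈ A, |P k - Q k| := Finset.sum_nonneg fun k _ => abs_nonneg _
  calc ∑ k ∈ A, |P k - Q k| = Real.sqrt ((∑ k ∈ A, |P k - Q k|) ^ 2) := (Real.sqrt_sq hnn).symm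
    _ ≤ Real.sqrt ((∑ ℓ, q ℓ ^ 2 / p ℓ) ^ n - 1) := Real.sqrt_le_sqrt hcs

lemma S_eq (r : ℕ) (p : Fin (r + 1) → ℝ) (hp : ∀ ℓ, 0 < p ℓ)
    (hsum : ∑ ℓ, p ℓ = 1) (ε : ℝ) :
    ∑ ℓ, ((1 - ε) * p ℓ + (if ℓ = Fin.last r then ε else 0)) ^ 2 / p ℓ
      = 1 + ε ^ 2 * ((1 - p (Fin.last r)) / p (Fin.last r)) := by
  rw [Fin.sum_univ_castSucc] at hsum ⊢
  have h1 : ∀ i : Fin r,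
      ((1 - ε) * p (Fin.castSucc i) + (if Fin.castSucc i = Fin.last r then ε else 0)) ^ 2
        / p (Fin.castSucc i) = (1 - ε) ^ 2 * p (Fin.castSucc i) := by
    intro i
    rw [if_neg (Fin.castSucc_lt_last i).ne, add_zero]
    have hx : p (Fin.castSucc i) ≠ 0 := (hp _).ne'
    field_simp
  rw [Finset.sum_congr rfl (fun i _ => h1 i), ← Finset.mul_sum, if_pos rfl]
  have hpl : p (Fin.last r) ≠ 0 := (hp _).ne'
  have hs : ∑ i : Fin r, p (Fin.castSucc i) = 1 - p (Fin.last r) := by linarith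
  rw [hs]
  field_simp
  ring

/-- Fix `r ≥ 2` and `K ≥ 0`. Let `lam n > 0` with `lam n → 0` and
`n^{1/r} * lam n → ∞`. For `n > K`, let `p⁽ⁿ⁾` be the Poisson bucket probability vector of
`Poisson (lam n)` with threshold `r`, and let `p̄⁽ⁿ⁾_ℓ = (1 - K/n) p⁽ⁿ⁾_ℓ + [ℓ = r] K/n`. Then
`d_TV(Multinomial (n; p⁽ⁿ⁾), Multinomial (n; p̄⁽ⁿ⁾)) → 0` as `n → ∞`, where
`d_TV(P, Q) = (1/2) ∑_k |P k - Q k|`. -/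
theorem dTV_multinomial_planted_tendsto_zero
    (r K : ℕ) (hr : 2 ≤ r) (lam : ℕ → ℝ) (hpos : ∀ n, 0 < lam n)
    (hlam0 : Tendsto lam atTop (𝓝 0))
    (hlam : Tendsto (fun n : ℕ => (n : ℝ) ^ ((1 : ℝ) / (r : ℝ)) * lam n) atTop atTop) :
    Tendsto (fun n : ℕ => (1 / 2 : ℝ) * ∑' k : Fin (r + 1) → ℕ,
        |multinomialPmf n (poissonBucketVec r (lam n)) k -
          multinomialPmf n
            (fun ℓ => (1 - (K : ℝ) / (n : ℝ)) * poissonBucketVec r (lam n) ℓ +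
              (if ℓ = Fin.last r then (K : ℝ) / (n : ℝ) else 0)) k|)
      atTop (𝓝 0) := by
  have hr0 : r ≠ 0 := by omega
  have hppos : ∀ n ℓ, 0 < poissonBucketVec r (lam n) ℓ := fun n ℓ => bucket_pos (hpos n) ℓ
  have hpsum : ∀ n, ∑ ℓ, poissonBucketVec r (lam n) ℓ = 1 := fun n => bucket_sum (hpos n)
  set pr : ℕ → ℝ := fun n => poissonBucketVec r (lam n) (Fin.last r) with hprdef
  have hprpos : ∀ n, 0 < pr n := fun n => hppos n _
  have hprle : ∀ n, pr n ≤ 1 := by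
    intro n
    have h := Finset.single_le_sum (f := poissonBucketVec r (lam n))
      (fun ℓ _ => (hppos n ℓ).le) (Finset.mem_univ (Fin.last r))
    rw [hpsum n] at h; exact h
  set x : ℕ → ℝ := fun n => ((K : ℝ) / (n : ℝ)) ^ 2 * ((1 - pr n) / pr n) with hxdef
  have hxnn : ∀ n, 0 ≤ x n := fun n =>
    mul_nonneg (sq_nonneg _) (div_nonneg (by linarith [hprle n]) (hprpos n).le)
  have key : ∀ n : ℕ, (1 / 2 : ℝ) * ∑' k : Fin (r + 1) → ℕ,
        |multinomialPmf n (poissonBucketVec r (lam n)) k -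
          multinomialPmf n
            (fun ℓ => (1 - (K : ℝ) / (n : ℝ)) * poissonBucketVec r (lam n) ℓ +
              (if ℓ = Fin.last r then (K : ℝ) / (n : ℝ) else 0)) k|
      ≤ (1 / 2 : ℝ) * Real.sqrt (Real.exp ((n : ℝ) * x n) - 1) := by
    intro n
    have hq : ∑ ℓ, ((1 - (K : ℝ) / (n : ℝ)) * poissonBucketVec r (lam n) ℓ +
        (if ℓ = Fin.last r then (K : ℝ) / (n : ℝ) else 0)) = 1 := by
      rw [Finset.sum_add_distrib, ← Finset.mul_sum, hpsum n, Finset.sum_ite_eq']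
      simp
    have hb := tv_bound (r + 1) n (poissonBucketVec r (lam n))
      (fun ℓ => (1 - (K : ℝ) / (n : ℝ)) * poissonBucketVec r (lam n) ℓ +
        (if ℓ = Fin.last r then (K : ℝ) / (n : ℝ) else 0))
      (hppos n) (hpsum n) hq
    rw [S_eq r (poissonBucketVec r (lam n)) (hppos n) (hpsum n) ((K : ℝ) / (n : ℝ))] at hb
    have h2 : (1 + x n) ^ n ≤ Real.exp ((n : ℝ) * x n) := by
      rw [Real.exp_nat_mul]
      exact pow_le_pow_left₀ (by linarith [hxnn n])
        (by linarith [Real.add_one_le_exp (x n)]) n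
    have h3 : Real.sqrt ((1 + x n) ^ n - 1) ≤ Real.sqrt (Real.exp ((n : ℝ) * x n) - 1) :=
      Real.sqrt_le_sqrt (by linarith)
    refine mul_le_mul_of_nonneg_left (le_trans ?_ h3) (by norm_num)
    exact hb
  have hnlam : Tendsto (fun n : ℕ => (n : ℝ) * lam n ^ r) atTop atTop := by
    have h1 : Tendsto (fun n : ℕ => ((n : ℝ) ^ ((1 : ℝ) / (r : ℝ)) * lam n) ^ r) atTop atTop :=
      (tendsto_pow_atTop hr0).comp hlam
    refine h1.congr (fun n => ?_)
    rw [mul_pow, ← Real.rpow_natCast ((n : ℝ) ^ ((1 : ℝ) / (r : ℝ))) r,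
      ← Real.rpow_mul (Nat.cast_nonneg n), one_div,
      inv_mul_cancel₀ (by exact_mod_cast hr0 : (r : ℝ) ≠ 0), Real.rpow_one]
  have hfac : Tendsto (fun n : ℕ => Real.exp (-lam n) / (r.factorial : ℝ)) atTop
      (𝓝 ((1 : ℝ) / (r.factorial : ℝ))) := by
    have h0 : Tendsto (fun n => -lam n) atTop (𝓝 0) := by simpa using hlam0.neg
    have h1 : Tendsto (fun n => Real.exp (-lam n)) atTop (𝓝 1) := by
      simpa [Function.comp_def] using (Real.continuous_exp.tendsto 0).comp h0
    simpa using h1.div_const (r.factorial : ℝ)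
  have hnpr : Tendsto (fun n : ℕ => (n : ℝ) * pr n) atTop atTop := by
    have hmul : Tendsto (fun n : ℕ =>
        ((n : ℝ) * lam n ^ r) * (Real.exp (-lam n) / (r.factorial : ℝ))) atTop atTop :=
      hnlam.atTop_mul_pos (by positivity) hfac
    refine tendsto_atTop_mono' atTop ?_ hmul
    refine Filter.Eventually.of_forall (fun n => ?_)
    have hge : poissonPmfR (lam n) r ≤ pr n := bucket_last_ge (hpos n)
    have heq : (n : ℝ) * lam n ^ r * (Real.exp (-lam n) / (r.factorial : ℝ))
        = (n : ℝ) * poissonPmfR (lam n) r := by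
      rw [poissonPmfR]; ring
    dsimp only
    rw [heq]
    exact mul_le_mul_of_nonneg_left hge (Nat.cast_nonneg n)
  have hg0 : Tendsto (fun n : ℕ => (K : ℝ) ^ 2 / ((n : ℝ) * pr n)) atTop (𝓝 0) :=
    tendsto_const_nhds.div_atTop hnpr
  have hx0 : Tendsto (fun n : ℕ => (n : ℝ) * x n) atTop (𝓝 0) := by
    refine tendsto_of_tendsto_of_tendsto_of_le_of_le' tendsto_const_nhds hg0 ?_ ?_
    · exact Filter.Eventually.of_forall (fun n => mul_nonneg (Nat.cast_nonneg n) (hxnn n))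
    · filter_upwards [Filter.eventually_ge_atTop 1] with n hn
      have hn0 : (0 : ℝ) < (n : ℝ) := by exact_mod_cast hn
      have heq : (n : ℝ) * x n = (K : ℝ) ^ 2 * (1 - pr n) / ((n : ℝ) * pr n) := by
        simp only [hxdef]
        field_simp [hn0.ne', (hprpos n).ne']
      rw [heq]
      exact div_le_div₀ (by positivity)
        (by nlinarith [(hprpos n).le, sq_nonneg (K : ℝ)])
        (mul_pos hn0 (hprpos n)) le_rfl
  have hb0 : Tendsto (fun n : ℕ => (1 / 2 : ℝ) * Real.sqrt (Real.exp ((n : ℝ) * x n) - 1))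
      atTop (𝓝 0) := by
    have h1 : Tendsto (fun n : ℕ => Real.exp ((n : ℝ) * x n) - 1) atTop (𝓝 0) := by
      have h := (Real.continuous_exp.tendsto 0).comp hx0
      have := h.sub_const 1
      simpa using this
    have h2 : Tendsto (fun n : ℕ => Real.sqrt (Real.exp ((n : ℝ) * x n) - 1)) atTop (𝓝 0) := by
      have := (Real.continuous_sqrt.tendsto 0).comp h1
      simpa [Function.comp_def] using this
    simpa using h2.const_mul (1 / 2 : ℝ)
  refine tendsto_of_tendsto_of_tendsto_of_le_of_le' tendsto_const_nhds hb0 ?_ ?_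
  · exact Filter.Eventually.of_forall
      (fun n => mul_nonneg (by norm_num) (tsum_nonneg (fun k => abs_nonneg _)))
  · exact Filter.Eventually.of_forall key
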